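/- Let $\sigma: \mathbb{H} \to \mathbb{H}$ be an $\mathbb{R}$-linear map satisfying $\sigma(xy) = \sigma(y)\sigma(x)$ for all $x, y \in \mathbb{H}$. Then $\sigma^2 = \mathrm{Id}$ if and only if either $\sigma = \sigma_c$ (the standard quaternionic conjugation) or $\sigma = C_\alpha \circ \sigma_c$ for some $\alpha \in \mathbb{H}$ with $\alpha^2 = -1$, where $C_\alpha(x) := \alpha x \alpha^{-1}$. -/

import Mathlib

open Quaternion

noncomputable section QInvAux

private def qi : Quaternion ℝ := ⟨0,1,0,0⟩
private def qj : Quaternion ℝ := ⟨0,0,1,0⟩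
private def qk : Quaternion ℝ := ⟨0,0,0,1⟩

attribute [local simp] Quaternion.re_mul Quaternion.imI_mul Quaternion.imJ_mul Quaternion.imK_mul

@[local simp] private lemma qi_re : qi.re = 0 := rfl
@[local simp] private lemma qi_imI : qi.imI = 1 := rfl
@[local simp] private lemma qi_imJ : qi.imJ = 0 := rfl
@[local simp] private lemma qi_imK : qi.imK = 0 := rfl
@[local simp] private lemma qj_re : qj.re = 0 := rfl
@[local simp] private lemma qj_imI : qj.imI = 0 := rfl
@[local simp] private lemma qj_imJ : qj.imJ = 1 := rfl
@[local simp] private lemma qj_imK : qj.imK = 0 := rfl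
@[local simp] private lemma qk_re : qk.re = 0 := rfl
@[local simp] private lemma qk_imI : qk.imI = 0 := rfl
@[local simp] private lemma qk_imJ : qk.imJ = 0 := rfl
@[local simp] private lemma qk_imK : qk.imK = 1 := rfl

private lemma qi_mul_qi : qi * qi = -1 := by ext <;> simp
private lemma qj_mul_qj : qj * qj = -1 := by ext <;> simp
private lemma qi_mul_qj : qi * qj = qk := by ext <;> simp
private lemma qj_mul_qi : qj * qi = -qk := by ext <;> simp

private lemma decomp (x : Quaternion ℝ) :
    x = x.re • 1 + x.imI • qi + x.imJ • qj + x.imK • qk := by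
  ext <;> simp

set_option maxHeartbeats 1000000 in
private lemma exists_conj (φ : Quaternion ℝ → Quaternion ℝ)
    (hadd : ∀ x y, φ (x + y) = φ x + φ y)
    (hsmul : ∀ (r : ℝ) x, φ (r • x) = r • φ x)
    (hm : ∀ x y, φ (x * y) = φ x * φ y) (h1 : φ 1 = 1) :
    ∃ β : Quaternion ℝ, β ≠ 0 ∧ ∀ x, φ x * β = β * x := by
  set p := φ qi with hp
  set q := φ qj with hq
  have hneg : ∀ x, φ (-x) = -φ x := by
    intro x
    have := hsmul (-1) x
    simpa using this
  have hp2 : p * p = -1 := by rw [← hm, qi_mul_qi, hneg, h1]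
  have hq2 : q * q = -1 := by rw [← hm, qj_mul_qj, hneg, h1]
  have hk : φ qk = p * q := by rw [← hm, qi_mul_qj]
  have hqp : q * p = -(p * q) := by
    rw [← hm, ← hm, qj_mul_qi, hneg, ← qi_mul_qj, hm]
  -- step 1: find u ≠ 0 with u * qi = p * u
  obtain ⟨u, hu0, hui⟩ : ∃ u : Quaternion ℝ, u ≠ 0 ∧ u * qi = p * u := by
    by_cases hpi : p = -qi
    · refine ⟨qj, ?_, ?_⟩
      · intro h
        have := congrArg QuaternionAlgebra.imJ h
        simp at this
      · rw [hpi, qj_mul_qi, neg_mul, qi_mul_qj]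
    · refine ⟨1 - p * qi, ?_, ?_⟩
      · intro h
        apply hpi
        have h1' : p * qi = 1 := (sub_eq_zero.mp h).symm
        have h2 := congrArg (· * qi) h1'
        simp only [mul_assoc, qi_mul_qi, one_mul, mul_neg, mul_one] at h2
        exact neg_eq_iff_eq_neg.mp h2
      · calc (1 - p * qi) * qi = qi - p * (qi * qi) := by noncomm_ring
          _ = qi + p := by rw [qi_mul_qi]; noncomm_ring

          _ = p * (1 - p * qi) := by rw [mul_sub, ← mul_assoc, hp2]; noncomm_ring
  -- conjugated q
  set q' := u⁻¹ * (q * u) with hq'def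
  have hq'u : u * q' = q * u := by
    rw [hq'def, ← mul_assoc, mul_inv_cancel₀ hu0, one_mul]
  have hq'2 : q' * q' = -1 := by
    have h : u * (q' * q') = u * (-1) := by
      calc u * (q' * q') = (u * q') * q' := (mul_assoc _ _ _).symm
        _ = (q * u) * q' := by rw [hq'u]
        _ = q * (u * q') := mul_assoc _ _ _
        _ = q * (q * u) := by rw [hq'u]
        _ = (q * q) * u := (mul_assoc _ _ _).symm
        _ = u * (-1) := by rw [hq2]; noncomm_ring
    exact mul_left_cancel₀ hu0 h
  have hanti' : qi * q' + q' * qi = 0 := by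
    have h : u * (qi * q' + q' * qi) = 0 := by
      calc u * (qi * q' + q' * qi) = (u * qi) * q' + (u * q') * qi := by noncomm_ring
        _ = (p * u) * q' + (q * u) * qi := by rw [hui, hq'u]
        _ = p * (u * q') + q * (u * qi) := by rw [mul_assoc, mul_assoc]
        _ = p * (q * u) + q * (p * u) := by rw [hui, hq'u]
        _ = (p * q) * u + (q * p) * u := by rw [mul_assoc, mul_assoc]
        _ = 0 := by rw [hqp]; noncomm_ring
    exact (mul_eq_zero.mp h).resolve_left hu0
  have hre : q'.re = 0 := by
    have := congrArg QuaternionAlgebra.imI hanti'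
    simp at this
    linarith
  have himI : q'.imI = 0 := by
    have := congrArg QuaternionAlgebra.re hanti'
    simp at this
    linarith
  have hcd : q'.imJ ^ 2 + q'.imK ^ 2 = 1 := by
    have := congrArg QuaternionAlgebra.re hq'2
    simp [hre, himI] at this
    nlinarith
  -- step 2: find v ≠ 0 commuting with qi, with v * qj = q' * v
  obtain ⟨v, hv0, hvi, hvj⟩ :
      ∃ v : Quaternion ℝ, v ≠ 0 ∧ v * qi = qi * v ∧ v * qj = q' * v := by
    by_cases hqj' : q' = -qj
    · refine ⟨qi, ?_, rfl, ?_⟩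
      · intro h; have := congrArg QuaternionAlgebra.imI h; simp at this
      · rw [hqj', qi_mul_qj, neg_mul, qj_mul_qi, neg_neg]
    · refine ⟨(1 + q'.imJ) • (1 : Quaternion ℝ) + q'.imK • qi, ?_, ?_, ?_⟩
      · intro h
        apply hqj'
        have h1' : 1 + q'.imJ = 0 := by simpa using congrArg QuaternionAlgebra.re h
        have h2' : q'.imK = 0 := by simpa using congrArg QuaternionAlgebra.imI h
        refine Quaternion.ext _ _ ?_ ?_ ?_ ?_
        · simp [hre]
        · simp [himI]
        · simp only [Quaternion.imJ_neg, qj_imJ]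
          linarith
        · simp [h2']
      · ext <;> simp <;> ring
      · ext <;> simp [hre, himI] <;> nlinarith [hcd]
  refine ⟨u * v, mul_ne_zero hu0 hv0, ?_⟩
  have hβi : (u * v) * qi = p * (u * v) := by
    rw [mul_assoc, hvi, ← mul_assoc, hui, mul_assoc]
  have hβj : (u * v) * qj = q * (u * v) := by
    rw [mul_assoc, hvj, ← mul_assoc, hq'u, mul_assoc]
  have hβk : (u * v) * qk = (p * q) * (u * v) := by
    calc (u * v) * qk = ((u * v) * qi) * qj := by rw [← qi_mul_qj]; noncomm_ring
      _ = p * ((u * v) * qj) := by rw [hβi]; noncomm_ring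
      _ = (p * q) * (u * v) := by rw [hβj]; noncomm_ring
  intro x
  conv_lhs => rw [decomp x]
  conv_rhs => rw [decomp x]
  rw [hadd, hadd, hadd, hsmul, hsmul, hsmul, hsmul, h1, hk]
  rw [← hp, ← hq]
  simp only [add_mul, mul_add, smul_mul_assoc, mul_smul_comm, one_mul, mul_one,
    hβi, hβj, hβk]

set_option maxHeartbeats 1000000 in
private theorem quat_main (σ : Quaternion ℝ →ₗ[ℝ] Quaternion ℝ)
    (hanti : ∀ x y : Quaternion ℝ, σ (x * y) = σ y * σ x) :
    (∀ x, σ (σ x) = x) ↔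
      ((∀ x, σ x = star x) ∨
        ∃ α : Quaternion ℝ, α ^ 2 = -1 ∧ ∀ x, σ x = α * star x * α⁻¹) := by
  constructor
  · intro hinv
    have h1 : σ 1 = 1 := by
      have h := hanti (σ 1) 1
      rw [mul_one, hinv] at h
      simpa using h.symm
    obtain ⟨β, hβ0, hβ⟩ := exists_conj (fun x => σ (star x))
      (by intro x y; simp)
      (by intro r x; simp)
      (by intro x y; simp only [star_mul]; rw [hanti])
      (by simpa using h1)
    have hσβ : ∀ x, σ x * β = β * star x := fun x => by simpa using hβ (star x)
    have hσ : ∀ x, σ x = β * star x * β⁻¹ := by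
      intro x
      rw [eq_mul_inv_iff_mul_eq₀ hβ0]
      exact hσβ x
    have hstarσ : ∀ x, star (σ x) = β⁻¹ * (x * β) := by
      intro x
      have h := hσβ (σ x)
      rw [hinv] at h
      calc star (σ x) = (β⁻¹ * β) * star (σ x) := by rw [inv_mul_cancel₀ hβ0, one_mul]
        _ = β⁻¹ * (β * star (σ x)) := mul_assoc _ _ _
        _ = β⁻¹ * (x * β) := by rw [← h]
    set γ := star β * β⁻¹ with hγdef
    have hcomm : ∀ x : Quaternion ℝ, γ * x = x * γ := by
      intro x
      have h := congrArg star (hσβ x)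
      rw [star_mul, star_mul, star_star, hstarσ x] at h
      calc γ * x
          = (star β * β⁻¹) * x * (β * β⁻¹) := by rw [hγdef, mul_inv_cancel₀ hβ0, mul_one]
        _ = star β * (β⁻¹ * (x * β)) * β⁻¹ := by noncomm_ring
        _ = (x * star β) * β⁻¹ := by rw [h]
        _ = x * γ := by rw [hγdef]; exact mul_assoc _ _ _
    have hK : γ.imK = 0 := by
      have h := congrArg QuaternionAlgebra.imJ (hcomm qi)
      simp at h
      linarith
    have hJ : γ.imJ = 0 := by
      have h := congrArg QuaternionAlgebra.imK (hcomm qi)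
      simp at h
      linarith
    have hI : γ.imI = 0 := by
      have h := congrArg QuaternionAlgebra.imK (hcomm qj)
      simp at h
      linarith
    set t := γ.re with htdef
    have hγ : γ = t • (1 : Quaternion ℝ) := by
      ext <;> simp [hI, hJ, hK, htdef]
    have hstarβ : star β = t • β := by
      calc star β = γ * β := by rw [hγdef, mul_assoc, inv_mul_cancel₀ hβ0, mul_one]
        _ = (t • (1 : Quaternion ℝ)) * β := by rw [hγ]
        _ = t • β := by rw [smul_mul_assoc, one_mul]
    have ht2 : t * t = 1 := by
      have h := congrArg star hstarβ
      rw [star_star, Quaternion.star_smul, hstarβ, smul_smul] at h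
      have h2 : (1 - t * t) • β = 0 := by
        rw [sub_smul, one_smul, sub_eq_zero]
        exact h
      rcases smul_eq_zero.mp h2 with h3 | h3
      · linarith
      · exact absurd h3 hβ0
    rcases mul_self_eq_one_iff.mp ht2 with ht | ht
    · -- t = 1 : σ = star
      left
      have hb : star β = β := by rw [hstarβ, ht, one_smul]
      have hbI : β.imI = 0 := by
        have := congrArg QuaternionAlgebra.imI hb
        simp at this
        linarith
      have hbJ : β.imJ = 0 := by
        have := congrArg QuaternionAlgebra.imJ hb
        simp at this
        linarith
      have hbK : β.imK = 0 := by
        have := congrArg QuaternionAlgebra.imK hb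
        simp at this
        linarith
      have hβr : β = β.re • (1 : Quaternion ℝ) := by
        ext <;> simp [hbI, hbJ, hbK]
      intro x
      apply mul_right_cancel₀ hβ0
      rw [hσβ x, hβr, smul_mul_assoc, mul_smul_comm, one_mul, mul_one]
    · -- t = -1 : σ = C_α ∘ star
      right
      have hb : star β = -β := by rw [hstarβ, ht, neg_smul, one_smul]
      have hββ : β * β = -(((normSq β : ℝ) : Quaternion ℝ)) := by
        nth_rewrite 2 [show β = -star β from by rw [hb, neg_neg]]
        rw [mul_neg, Quaternion.self_mul_star]
      have hn : 0 < normSq β :=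
        lt_of_le_of_ne Quaternion.normSq_nonneg
          (Ne.symm (Quaternion.normSq_ne_zero.mpr hβ0))
      set s := Real.sqrt (normSq β) with hsdef
      have hs : 0 < s := Real.sqrt_pos.mpr hn
      have hs2 : s * s = normSq β := Real.mul_self_sqrt hn.le
      refine ⟨s⁻¹ • β, ?_, ?_⟩
      · rw [sq, smul_mul_assoc, mul_smul_comm, smul_smul, hββ, ← hs2]
        rw [smul_neg, Quaternion.smul_coe]
        rw [show s⁻¹ * s⁻¹ * (s * s) = 1 by field_simp]
        simp
      · intro x
        have hαinv : (s⁻¹ • β)⁻¹ = s • β⁻¹ := by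
          apply inv_eq_of_mul_eq_one_right
          rw [smul_mul_assoc, mul_smul_comm, smul_smul, mul_inv_cancel₀ hβ0,
            inv_mul_cancel₀ hs.ne', one_smul]
        rw [hαinv, hσ x, smul_mul_assoc, smul_mul_assoc, mul_smul_comm, smul_smul,
          inv_mul_cancel₀ hs.ne', one_smul]
  · rintro (h | ⟨α, hα2, hα⟩) x
    · rw [h, h, star_star]
    · have hαα : α * α = -1 := by rw [← sq]; exact hα2
      have hα0 : α ≠ 0 := by
        intro h0
        rw [h0, mul_zero] at hαα
        have := congrArg QuaternionAlgebra.re hαα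
        simp at this
      have hre : α.re = 0 := by
        have h1 := congrArg QuaternionAlgebra.imI hαα
        have h4 := congrArg QuaternionAlgebra.re hαα
        simp at h1 h4
        by_contra hne
        have hb : α.imI = 0 := by
          rcases mul_eq_zero.mp (show α.re * α.imI = 0 by linarith) with h | h
          · exact absurd h hne
          · exact h
        have h2 := congrArg QuaternionAlgebra.imJ hαα
        have h3 := congrArg QuaternionAlgebra.imK hαα
        simp at h2 h3
        have hc : α.imJ = 0 := by
          rcases mul_eq_zero.mp (show α.re * α.imJ = 0 by linarith) with h | h
          · exact absurd h hne
          · exact h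
        have hd : α.imK = 0 := by
          rcases mul_eq_zero.mp (show α.re * α.imK = 0 by linarith) with h | h
          · exact absurd h hne
          · exact h
        rw [hb, hc, hd] at h4
        nlinarith [sq_nonneg α.re]
      have hstarα : star α = -α := by
        ext <;> simp [hre]
      have hαinv : α⁻¹ = -α :=
        inv_eq_of_mul_eq_one_right (by rw [mul_neg, hαα, neg_neg])
      rw [hα, hα, hαinv, star_mul, star_mul, star_star, star_neg, hstarα, neg_neg]
      calc α * (α * (x * -α)) * -α = (α * α) * x * (α * α) := by noncomm_ring
        _ = x := by rw [hαα]; noncomm_ring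

end QInvAux

/-- An `ℝ`-linear anti-homomorphism `σ : ℍ → ℍ` satisfies `σ² = Id` if and
only if either `σ` is the standard quaternionic conjugation `σ_c = star`, or
`σ = C_α ∘ σ_c` for some `α ∈ ℍ` with `α² = -1`, where `C_α x = α x α⁻¹`. -/
theorem quaternion_involution_iff (σ : Quaternion ℝ →ₗ[ℝ] Quaternion ℝ)
    (hanti : ∀ x y : Quaternion ℝ, σ (x * y) = σ y * σ x) :
    (∀ x, σ (σ x) = x) ↔
      ((∀ x, σ x = star x) ∨
        ∃ α : Quaternion ℝ, α ^ 2 = -1 ∧ ∀ x, σ x = α * star x * α⁻¹) := by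
  exact quat_main σ hanti
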